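/- Let (S, 𝓕, τ) be a probabilistic metric space with τ continuous, and let E be a subset of S. The following are equivalent: (a) E is complete (every Cauchy sequence in E converges to a point of E) and probabilistic totally bounded; (b) (Bolzano–Weierstrass property) every sequence in E has a subsequence converging to a point of E; (c) (Heine–Borel property) every cover of E by sets open in the strong topology has a finite subcover. -/

import Mathlib

open Set Filter Topology

/-- A distance distribution function: nondecreasing, left-continuous,
with values in `[0,1]`, and vanishing on `(-∞, 0]`. -/
def IsDDF (F : ℝ → ℝ) : Prop :=
  Monotone F ∧ (∀ x : ℝ, ContinuousWithinAt F (Set.Iio x) x) ∧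
    (∀ x, 0 ≤ F x ∧ F x ≤ 1) ∧ ∀ x ≤ 0, F x = 0

/-- The condition `(F, G; h)` in the definition of the modified Lévy distance. -/
def LevyCond (F G : ℝ → ℝ) (h : ℝ) : Prop :=
  ∀ x ∈ Set.Ioo (-(1 / h)) (1 / h), F (x - h) - h ≤ G x ∧ G x ≤ F (x + h) + h

/-- The modified Lévy distance on `Δ⁺`. -/
noncomputable def dL (F G : ℝ → ℝ) : ℝ :=
  sInf {h : ℝ | h ∈ Set.Ioc (0 : ℝ) 1 ∧ LevyCond F G h ∧ LevyCond G F h}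

/-- The distribution function `H₀`, equal to `0` on `(-∞, 0]` and `1` on `(0, ∞)`. -/
noncomputable def H0 : ℝ → ℝ := fun x => if x ≤ 0 then 0 else 1

/-- A triangle function: a binary operation on `Δ⁺` that is commutative, associative,
nondecreasing in each argument, and has `H₀` as identity. -/
def IsTriangleFunction (τ : (ℝ → ℝ) → (ℝ → ℝ) → (ℝ → ℝ)) : Prop :=
  (∀ F G, IsDDF F → IsDDF G → IsDDF (τ F G)) ∧
  (∀ F G, IsDDF F → IsDDF G → τ F G = τ G F) ∧
  (∀ F G K, IsDDF F → IsDDF G → IsDDF K → τ (τ F G) K = τ F (τ G K)) ∧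
  (∀ F G K, IsDDF F → IsDDF G → IsDDF K → F ≤ G → τ F K ≤ τ G K) ∧
  (∀ F, IsDDF F → τ H0 F = F)

/-- Continuity of a triangle function with respect to the modified Lévy metric on `Δ⁺`
(sequential continuity, which is equivalent since `d_L` is a metric). -/
def ContinuousTF (τ : (ℝ → ℝ) → (ℝ → ℝ) → (ℝ → ℝ)) : Prop :=
  ∀ (F G : ℕ → ℝ → ℝ) (F₀ G₀ : ℝ → ℝ),
    (∀ n, IsDDF (F n)) → (∀ n, IsDDF (G n)) → IsDDF F₀ → IsDDF G₀ →
    Filter.Tendsto (fun n => dL (F n) F₀) Filter.atTop (nhds 0) →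
    Filter.Tendsto (fun n => dL (G n) G₀) Filter.atTop (nhds 0) →
    Filter.Tendsto (fun n => dL (τ (F n) (G n)) (τ F₀ G₀)) Filter.atTop (nhds 0)

/-- `(S, 𝓕, τ)` is a probabilistic metric space. -/
structure IsPMSpace {S : Type*} (𝓕 : S → S → ℝ → ℝ)
    (τ : (ℝ → ℝ) → (ℝ → ℝ) → (ℝ → ℝ)) : Prop where
  ddf : ∀ p q, IsDDF (𝓕 p q)
  tf : IsTriangleFunction τ
  refl : ∀ p, 𝓕 p p = H0
  ne : ∀ p q, p ≠ q → 𝓕 p q ≠ H0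
  symm : ∀ p q, 𝓕 p q = 𝓕 q p
  tri : ∀ p q r, τ (𝓕 p q) (𝓕 q r) ≤ 𝓕 p r

/-- The strong neighborhood `N_p(t) = {q : F_{p,q}(t) > 1 - t}`. -/
def Npt {S : Type*} (𝓕 : S → S → ℝ → ℝ) (p : S) (t : ℝ) : Set S :=
  {q | 1 - t < 𝓕 p q t}

/-- A set is open in the strong topology iff it contains a strong neighborhood
of each of its points. -/
def StrongOpen {S : Type*} (𝓕 : S → S → ℝ → ℝ) (U : Set S) : Prop :=
  ∀ p ∈ U, ∃ t > 0, Npt 𝓕 p t ⊆ U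

/-- Convergence of a sequence in a PM space (the `(ε, λ)`-sense). -/
def PMConv {S : Type*} (𝓕 : S → S → ℝ → ℝ) (p : ℕ → S) (p₀ : S) : Prop :=
  ∀ ε > (0 : ℝ), ∀ lam ∈ Set.Ioo (0 : ℝ) 1, ∃ n₀ : ℕ, ∀ n ≥ n₀, 1 - lam < 𝓕 (p n) p₀ ε

/-- Cauchy sequences in a PM space. -/
def PMCauchy {S : Type*} (𝓕 : S → S → ℝ → ℝ) (p : ℕ → S) : Prop :=
  ∀ ε > (0 : ℝ), ∀ lam ∈ Set.Ioo (0 : ℝ) 1, ∃ n₀ : ℕ, ∀ n ≥ n₀, ∀ m ≥ n₀,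
    1 - lam < 𝓕 (p n) (p m) ε

section Basic

lemma H0_ddf : IsDDF H0 := by
  refine ⟨?_, ?_, ?_, ?_⟩
  · intro a b hab
    unfold H0
    by_cases hb : b ≤ 0
    · rw [if_pos (hab.trans hb), if_pos hb]
    · rw [if_neg hb]
      split <;> norm_num
  · intro x
    by_cases hx : 0 < x
    · have h1 : Set.Ioi (0:ℝ) ∈ nhdsWithin x (Set.Iio x) :=
        nhdsWithin_le_nhds (Ioi_mem_nhds hx)
      refine Filter.Tendsto.congr' ?_ (tendsto_const_nhds (α := ℝ) (x := H0 x))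
      filter_upwards [h1] with y hy
      simp [H0, not_le.mpr (Set.mem_Ioi.mp hy), not_le.mpr hx]
    · refine Filter.Tendsto.congr' ?_ (tendsto_const_nhds (α := ℝ) (x := H0 x))
      filter_upwards [self_mem_nhdsWithin] with y (hy : y < x)
      have hy0 : y ≤ 0 := le_of_lt (lt_of_lt_of_le hy (not_lt.mp hx))
      simp [H0, hy0, not_lt.mp hx]
  · intro x
    unfold H0
    split <;> norm_num
  · intro x hx
    simp [H0, hx]

lemma IsDDF.nonneg {F : ℝ → ℝ} (hF : IsDDF F) (x : ℝ) : 0 ≤ F x := (hF.2.2.1 x).1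
lemma IsDDF.le_one {F : ℝ → ℝ} (hF : IsDDF F) (x : ℝ) : F x ≤ 1 := (hF.2.2.1 x).2
lemma IsDDF.mono {F : ℝ → ℝ} (hF : IsDDF F) : Monotone F := hF.1

/-- The set whose infimum defines `dL`. -/
def dLSet (F G : ℝ → ℝ) : Set ℝ :=
  {h : ℝ | h ∈ Set.Ioc (0 : ℝ) 1 ∧ LevyCond F G h ∧ LevyCond G F h}

lemma dL_eq (F G : ℝ → ℝ) : dL F G = sInf (dLSet F G) := rfl

lemma levyCond_one {F G : ℝ → ℝ} (hF : IsDDF F) (hG : IsDDF G) : LevyCond F G 1 := by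
  intro x _
  constructor
  · linarith [hF.le_one (x - 1), hG.nonneg x]
  · linarith [hG.le_one x, hF.nonneg (x + 1)]

lemma one_mem_dLSet {F G : ℝ → ℝ} (hF : IsDDF F) (hG : IsDDF G) : (1:ℝ) ∈ dLSet F G :=
  ⟨⟨one_pos, le_refl 1⟩, levyCond_one hF hG, levyCond_one hG hF⟩

lemma dLSet_bddBelow (F G : ℝ → ℝ) : BddBelow (dLSet F G) :=
  ⟨0, fun x hx => le_of_lt hx.1.1⟩

lemma dL_nonneg (F G : ℝ → ℝ) : 0 ≤ dL F G :=
  Real.sInf_nonneg (fun x hx => le_of_lt hx.1.1)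

lemma mem_ioo_aux {m x : ℝ} (hm : 0 < m) (hx : 0 < x) (hxm : x * m < 1) :
    x ∈ Set.Ioo (-(1 / m)) (1 / m) := by
  constructor
  · have : 0 < 1/m := by positivity
    linarith
  · rw [lt_div_iff₀ hm]; exact hxm

lemma mem_dLSet_H0 {F : ℝ → ℝ} (hF : IsDDF F) {t : ℝ} (ht : 0 < t) (ht1 : t ≤ 1)
    (hFt : 1 - t < F t) : t ∈ dLSet F H0 := by
  refine ⟨⟨ht, ht1⟩, ?_, ?_⟩
  · intro x hx
    constructor
    · by_cases hx0 : x ≤ 0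
      · rw [hF.2.2.2 (x - t) (by linarith)]
        simp [H0, hx0]
        linarith
      · have : H0 x = 1 := by simp [H0, hx0]
        rw [this]; linarith [hF.le_one (x - t)]
    · by_cases hx0 : x ≤ 0
      · have : H0 x = 0 := by simp [H0, hx0]
        rw [this]; linarith [hF.nonneg (x + t)]
      · have h1 : H0 x = 1 := by simp [H0, hx0]
        have h2 : F t ≤ F (x + t) := hF.mono (by linarith)
        rw [h1]; linarith
  · intro x hx
    constructor
    · by_cases hx0 : x - t ≤ 0
      · have : H0 (x - t) = 0 := by simp [H0, hx0]
        rw [this]; linarith [hF.nonneg x]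
      · have h1 : H0 (x - t) = 1 := by simp [H0, hx0]
        have h2 : F t ≤ F x := hF.mono (by linarith)
        rw [h1]; linarith
    · by_cases hx0 : x + t ≤ 0
      · have : H0 (x + t) = 0 := by simp [H0, hx0]
        rw [this, hF.2.2.2 x (by linarith)]; linarith
      · have : H0 (x + t) = 1 := by simp [H0, hx0]
        rw [this]; linarith [hF.le_one x]

lemma dL_H0_le {F : ℝ → ℝ} (hF : IsDDF F) {t : ℝ} (ht : 0 < t) (ht1 : t ≤ 1)
    (hFt : 1 - t < F t) : dL F H0 ≤ t :=
  csInf_le (dLSet_bddBelow _ _) (mem_dLSet_H0 hF ht ht1 hFt)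

lemma lt_of_dL_H0_lt {F : ℝ → ℝ} (hF : IsDDF F) {t : ℝ} (ht : 0 < t) (ht1 : t ≤ 1)
    (hdL : dL F H0 < t) : 1 - t < F t := by
  obtain ⟨h, hmem, hht⟩ := exists_lt_of_csInf_lt ⟨1, one_mem_dLSet hF H0_ddf⟩ hdL
  obtain ⟨⟨hh0, hh1⟩, _, hcond⟩ := hmem
  have hx : t ∈ Set.Ioo (-(1 / h)) (1 / h) :=
    mem_ioo_aux hh0 ht (by nlinarith)
  have := (hcond t hx).1
  have hH : H0 (t - h) = 1 := by simp [H0, not_le.mpr (by linarith : (0:ℝ) < t - h)]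
  rw [hH] at this
  linarith

lemma dL_self {F : ℝ → ℝ} (hF : Monotone F) : dL F F = 0 := by
  have hsub : ∀ h : ℝ, 0 < h → h ≤ 1 → h ∈ dLSet F F := by
    intro h hh0 hh1
    have hc : LevyCond F F h := by
      intro x _
      exact ⟨by linarith [hF (by linarith : x - h ≤ x)], by linarith [hF (by linarith : x ≤ x + h)]⟩
    exact ⟨⟨hh0, hh1⟩, hc, hc⟩
  refine le_antisymm ?_ (dL_nonneg F F)
  refine le_of_forall_pos_le_add ?_
  intro ε hε
  have : dL F F ≤ min ε 1 := csInf_le (dLSet_bddBelow _ _)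
    (hsub _ (lt_min hε one_pos) (min_le_right _ _))
  calc dL F F ≤ min ε 1 := this
  _ ≤ ε := min_le_left _ _
  _ ≤ 0 + ε := by linarith

end Basic

section Key

variable {S : Type*} {𝓕 : S → S → ℝ → ℝ} {τ : (ℝ → ℝ) → (ℝ → ℝ) → (ℝ → ℝ)}

lemma key_eta (hPM : IsPMSpace 𝓕 τ) (hτ : ContinuousTF τ) {t : ℝ} (ht : 0 < t) :
    ∃ η, 0 < η ∧ η < t ∧ η < 1 ∧ ∀ p q r : S,
      1 - η < 𝓕 p q η → 1 - η < 𝓕 q r η → 1 - t < 𝓕 p r t := by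
  rcases le_or_gt t 1 with ht1 | ht1
  · by_contra hcon
    push_neg at hcon
    have hstep : ∀ n : ℕ, ∃ pqr : S × S × S,
        1 - t/(n+2) < 𝓕 pqr.1 pqr.2.1 (t/(n+2)) ∧
        1 - t/(n+2) < 𝓕 pqr.2.1 pqr.2.2 (t/(n+2)) ∧
        𝓕 pqr.1 pqr.2.2 t ≤ 1 - t := by
      intro n
      have hn0 : (0:ℝ) < t/(n+2) := by positivity
      have hnt : t/(n+2) < t := by
        rw [div_lt_iff₀ (by positivity)]
        nlinarith [ht]
      have hn1 : t/(n+2) < 1 := by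
        have : t/(n+2) ≤ t/2 := by
          apply div_le_div_of_nonneg_left (le_of_lt ht) (by norm_num)
          · push_cast; linarith [Nat.cast_nonneg (α := ℝ) n]
        linarith
      obtain ⟨p, q, r, h1, h2, h3⟩ := hcon (t/(n+2)) hn0 hnt hn1
      exact ⟨(p, q, r), h1, h2, h3⟩
    choose pqr h1 h2 h3 using hstep
    set Fn : ℕ → ℝ → ℝ := fun n => 𝓕 (pqr n).1 (pqr n).2.1 with hFn
    set Gn : ℕ → ℝ → ℝ := fun n => 𝓕 (pqr n).2.1 (pqr n).2.2 with hGn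
    have hFd : ∀ n, IsDDF (Fn n) := fun n => hPM.ddf _ _
    have hGd : ∀ n, IsDDF (Gn n) := fun n => hPM.ddf _ _
    have hbound : ∀ (H : ℕ → ℝ → ℝ), (∀ n, IsDDF (H n)) →
        (∀ n : ℕ, 1 - t/(n+2) < H n (t/(n+2))) →
        Filter.Tendsto (fun n => dL (H n) H0) Filter.atTop (nhds 0) := by
      intro H hHd hH
      apply squeeze_zero (fun n => dL_nonneg _ _) (g := fun n : ℕ => t/(n+2))
      · intro n
        have hn0 : (0:ℝ) < t/(n+2) := by positivity
        have hn1 : t/(n+2) ≤ 1 := by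
          have h2' : t/(n+2) ≤ t/2 := by
            apply div_le_div_of_nonneg_left (le_of_lt ht) (by norm_num)
            push_cast; linarith [Nat.cast_nonneg (α := ℝ) n]
          linarith
        exact dL_H0_le (hHd n) hn0 hn1 (hH n)
      · have h := tendsto_one_div_add_atTop_nhds_zero_nat.const_mul t
        simp only [mul_zero] at h
        refine (h.comp (tendsto_add_atTop_nat 1)).congr fun n => ?_
        simp only [Function.comp_apply]
        push_cast
        ring
    have hFlim := hbound Fn hFd h1
    have hGlim := hbound Gn hGd h2
    have hτlim := hτ Fn Gn H0 H0 hFd hGd H0_ddf H0_ddf hFlim hGlim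
    rw [hPM.tf.2.2.2.2 H0 H0_ddf] at hτlim
    have hev : ∀ᶠ n in Filter.atTop, dL (τ (Fn n) (Gn n)) H0 < t :=
      hτlim.eventually_lt_const ht
    obtain ⟨n, hn⟩ := hev.exists
    have hτddf : IsDDF (τ (Fn n) (Gn n)) := hPM.tf.1 _ _ (hFd n) (hGd n)
    have hlt := lt_of_dL_H0_lt hτddf ht ht1 hn
    have htri := hPM.tri (pqr n).1 (pqr n).2.1 (pqr n).2.2 t
    exact absurd (h3 n) (not_le.mpr (lt_of_lt_of_le hlt htri))
  · refine ⟨1/2, by norm_num, by linarith, by norm_num, fun p q r _ _ => ?_⟩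
    exact lt_of_lt_of_le (by linarith) ((hPM.ddf p r).nonneg t)

lemma npt_strongOpen (hPM : IsPMSpace 𝓕 τ) (hτ : ContinuousTF τ) (p₀ : S) {t : ℝ}
    (ht : 0 < t) : StrongOpen 𝓕 (Npt 𝓕 p₀ t) := by
  intro q hq
  rcases le_or_gt t 1 with ht1 | ht1
  · by_contra hcon
    push_neg at hcon
    have hstep : ∀ n : ℕ, ∃ r : S, 1 - 1/(n+1) < 𝓕 q r (1/(n+1)) ∧ 𝓕 p₀ r t ≤ 1 - t := by
      intro n
      have hn0 : (0:ℝ) < 1/(n+1) := by positivity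
      obtain ⟨r, hr1, hr2⟩ := Set.not_subset.mp (hcon (1/(n+1)) hn0)
      exact ⟨r, hr1, not_lt.mp hr2⟩
    choose r hr1 hr2 using hstep
    set F : ℝ → ℝ := 𝓕 p₀ q with hFdef
    have hFd : IsDDF F := hPM.ddf _ _
    set Gn : ℕ → ℝ → ℝ := fun n => 𝓕 q (r n) with hGn
    have hGd : ∀ n, IsDDF (Gn n) := fun n => hPM.ddf _ _
    have hGlim : Filter.Tendsto (fun n => dL (Gn n) H0) Filter.atTop (nhds 0) := by
      apply squeeze_zero (fun n => dL_nonneg _ _) (g := fun n : ℕ => 1/((n:ℝ)+1))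
      · intro n
        have hn0 : (0:ℝ) < 1/(n+1) := by positivity
        have hn1 : (1:ℝ)/(n+1) ≤ 1 := by
          rw [div_le_one (by positivity)]
          linarith [Nat.cast_nonneg (α := ℝ) n]
        exact dL_H0_le (hGd n) hn0 hn1 (hr1 n)
      · exact tendsto_one_div_add_atTop_nhds_zero_nat
    have hFlim : Filter.Tendsto (fun _ : ℕ => dL F F) Filter.atTop (nhds 0) := by
      rw [dL_self hFd.mono]; exact tendsto_const_nhds
    have hτlim := hτ (fun _ => F) Gn F H0 (fun _ => hFd) hGd hFd H0_ddf hFlim hGlim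
    have hFH0 : τ F H0 = F := by
      rw [hPM.tf.2.1 F H0 hFd H0_ddf, hPM.tf.2.2.2.2 F hFd]
    rw [hFH0] at hτlim
    -- left continuity setup
    set ε : ℝ := (F t - (1 - t)) / 2 with hεdef
    have hε : 0 < ε := by simp only [hεdef]; have := hq; simp only [Npt, Set.mem_setOf_eq] at this; linarith
    have hlc : Filter.Tendsto F (nhdsWithin t (Set.Iio t)) (nhds (F t)) := hFd.2.1 t
    have hev1 : ∀ᶠ s in nhdsWithin t (Set.Iio t), F t - ε < F s := by
      have := hlc.eventually (eventually_gt_nhds (by linarith : F t - ε < F t))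
      exact this
    have hev2 : ∀ᶠ s in nhdsWithin t (Set.Iio t), s ∈ Set.Ioo 0 t := by
      have h1 : Set.Ioi (0:ℝ) ∈ nhdsWithin t (Set.Iio t) := nhdsWithin_le_nhds (Ioi_mem_nhds ht)
      filter_upwards [h1, self_mem_nhdsWithin] with s hs1 hs2
      exact ⟨hs1, hs2⟩
    obtain ⟨s, hs1, hs2⟩ := (hev1.and hev2).exists
    have hh0 : 0 < min (t - s) ε := lt_min (by linarith [hs2.2]) hε
    have hev3 : ∀ᶠ n in Filter.atTop, dL (τ F (Gn n)) F < min (t - s) ε :=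
      hτlim.eventually_lt_const hh0
    obtain ⟨n, hn⟩ := hev3.exists
    obtain ⟨m, hmem, hmlt⟩ := exists_lt_of_csInf_lt
      ⟨1, one_mem_dLSet (hPM.tf.1 _ _ hFd (hGd n)) hFd⟩ hn
    obtain ⟨⟨hm0, hm1⟩, _, hcond⟩ := hmem
    have hmε : m < ε := lt_of_lt_of_le hmlt (min_le_right _ _)
    have hms : m < t - s := lt_of_lt_of_le hmlt (min_le_left _ _)
    have htm : t * m < 1 := by
      have h1 : t * m ≤ m := mul_le_of_le_one_left (le_of_lt hm0) ht1
      have h2 : (0:ℝ) < s := hs2.1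
      linarith
    have hxt : t ∈ Set.Ioo (-(1/m)) (1/m) := mem_ioo_aux hm0 ht htm
    have hKt := (hcond t hxt).1
    have hFtm : F s ≤ F (t - m) := hFd.mono (by linarith)
    have hKgt : 1 - t < τ F (Gn n) t := by linarith
    have htri := hPM.tri p₀ q (r n) t
    exact absurd (hr2 n) (not_le.mpr (lt_of_lt_of_le hKgt htri))
  · refine ⟨1, one_pos, fun r _ => ?_⟩
    exact lt_of_lt_of_le (by linarith) ((hPM.ddf p₀ r).nonneg t)

end Key

section Main

variable {S : Type*} {𝓕 : S → S → ℝ → ℝ} {τ : (ℝ → ℝ) → (ℝ → ℝ) → (ℝ → ℝ)}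

lemma bw_of_complete_tb (hPM : IsPMSpace 𝓕 τ) (hτ : ContinuousTF τ) {E : Set S}
    (hc : ∀ p : ℕ → S, (∀ n, p n ∈ E) → PMCauchy 𝓕 p → ∃ p₀ ∈ E, PMConv 𝓕 p p₀)
    (htb : ∀ ε > (0:ℝ), ∃ P : Finset S, ↑P ⊆ E ∧ E ⊆ ⋃ p ∈ P, Npt 𝓕 p ε)
    (p : ℕ → S) (hp : ∀ n, p n ∈ E) :
    ∃ p₀ ∈ E, ∃ φ : ℕ → ℕ, StrictMono φ ∧ PMConv 𝓕 (p ∘ φ) p₀ := by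
  set tk : ℕ → ℝ := fun k => 1/(k+1) with htk
  have htkpos : ∀ k, 0 < tk k := fun k => by positivity
  have pigeon : ∀ (B : Set ℕ) (k : ℕ), ∃ C : Set ℕ, B.Infinite →
      C ⊆ B ∧ C.Infinite ∧ ∀ n ∈ C, ∀ m ∈ C, 1 - tk k < 𝓕 (p n) (p m) (tk k) := by
    intro B k
    by_cases hB : B.Infinite
    · obtain ⟨η, hη0, hηt, hη1, hkey⟩ := key_eta hPM hτ (htkpos k)
      obtain ⟨P, hPE, hPcov⟩ := htb η hη0
      have hex : ∃ q ∈ P, {n ∈ B | p n ∈ Npt 𝓕 q η}.Infinite := by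
        by_contra hfin
        push_neg at hfin
        have hsub : B ⊆ ⋃ q ∈ P, {n ∈ B | p n ∈ Npt 𝓕 q η} := by
          intro n hn
          obtain ⟨q, hq, hmem⟩ : ∃ q ∈ P, p n ∈ Npt 𝓕 q η := by
            simpa using hPcov (hp n)
          exact Set.mem_biUnion hq ⟨hn, hmem⟩
        have hfin2 : (⋃ q ∈ P, {n ∈ B | p n ∈ Npt 𝓕 q η}).Finite :=
          Set.Finite.biUnion P.finite_toSet
            (fun q hq => (hfin q hq))
        exact hB (hfin2.subset hsub)
      obtain ⟨q, _, hqinf⟩ := hex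
      refine ⟨{n ∈ B | p n ∈ Npt 𝓕 q η}, fun _ => ⟨fun n hn => hn.1, hqinf, ?_⟩⟩
      intro n hn m hm
      have h1 : 1 - η < 𝓕 (p n) q η := by rw [hPM.symm]; exact hn.2
      exact hkey _ _ _ h1 hm.2
    · exact ⟨∅, fun h => absurd h hB⟩
  choose G hG using pigeon
  set A : ℕ → Set ℕ := fun k => Nat.rec (G Set.univ 0) (fun k Ak => G Ak (k+1)) k with hA
  have hAk : ∀ k, (A k).Infinite ∧
      ∀ n ∈ A k, ∀ m ∈ A k, 1 - tk k < 𝓕 (p n) (p m) (tk k) := by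
    intro k
    induction k with
    | zero => exact ⟨(hG Set.univ 0 Set.infinite_univ).2.1, (hG Set.univ 0 Set.infinite_univ).2.2⟩
    | succ k ih =>
      exact ⟨(hG (A k) (k+1) ih.1).2.1, (hG (A k) (k+1) ih.1).2.2⟩
  have hAmono : Antitone A := by
    apply antitone_nat_of_succ_le
    intro k
    exact (hG (A k) (k+1) (hAk k).1).1
  have hgt : ∀ (k a : ℕ), ∃ b, b ∈ A k ∧ a < b := by
    intro k a
    obtain ⟨b, hb, hab⟩ := (hAk k).1.exists_gt a
    exact ⟨b, hb, hab⟩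
  choose f hf1 hf2 using hgt
  set φ : ℕ → ℕ := fun k => Nat.rec (f 0 0) (fun k x => f (k+1) x) k with hφdef
  have hφmem : ∀ k, φ k ∈ A k := by
    intro k
    cases k with
    | zero => rw [hφdef]; exact hf1 0 0
    | succ n => rw [hφdef]; exact hf1 (n+1) _
  have hφ : StrictMono φ := by
    apply strictMono_nat_of_lt_succ
    intro k
    rw [hφdef]
    exact hf2 (k+1) _
  have hcauchy : PMCauchy 𝓕 (p ∘ φ) := by
    intro ε hε lam hlam
    obtain ⟨k, hk⟩ : ∃ k : ℕ, 1/((k:ℝ)+1) < min ε lam :=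
      exists_nat_one_div_lt (lt_min hε hlam.1)
    refine ⟨k, fun n hn m hm => ?_⟩
    have h1 : φ n ∈ A k := hAmono hn (hφmem n)
    have h2 : φ m ∈ A k := hAmono hm (hφmem m)
    have h3 := (hAk k).2 (φ n) h1 (φ m) h2
    have h4 : 𝓕 (p (φ n)) (p (φ m)) (tk k) ≤ 𝓕 (p (φ n)) (p (φ m)) ε :=
      (hPM.ddf _ _).mono (le_of_lt (lt_of_lt_of_le hk (min_le_left _ _)))
    have h5 : tk k < lam := lt_of_lt_of_le hk (min_le_right _ _)
    show 1 - lam < 𝓕 (p (φ n)) (p (φ m)) ε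
    linarith
  obtain ⟨p₀, hE0, hconv⟩ := hc (p ∘ φ) (fun n => hp _) hcauchy
  exact ⟨p₀, hE0, φ, hφ, hconv⟩

lemma complete_of_bw (hPM : IsPMSpace 𝓕 τ) (hτ : ContinuousTF τ) {E : Set S}
    (hbw : ∀ p : ℕ → S, (∀ n, p n ∈ E) →
      ∃ p₀ ∈ E, ∃ φ : ℕ → ℕ, StrictMono φ ∧ PMConv 𝓕 (p ∘ φ) p₀) :
    ∀ p : ℕ → S, (∀ n, p n ∈ E) → PMCauchy 𝓕 p → ∃ p₀ ∈ E, PMConv 𝓕 p p₀ := by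
  intro p hp hcauchy
  obtain ⟨p₀, hE0, φ, hφ, hconv⟩ := hbw p hp
  refine ⟨p₀, hE0, ?_⟩
  intro ε hε lam hlam
  have ht : 0 < min ε lam := lt_min hε hlam.1
  obtain ⟨η, hη0, hηt, hη1, hkey⟩ := key_eta hPM hτ ht
  obtain ⟨n₀, hn₀⟩ := hcauchy η hη0 η ⟨hη0, hη1⟩
  obtain ⟨k₀, hk₀⟩ := hconv η hη0 η ⟨hη0, hη1⟩
  set k := max k₀ n₀ with hkdef
  have h1 : 1 - η < 𝓕 (p (φ k)) p₀ η := hk₀ k (le_max_left _ _)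
  refine ⟨n₀, fun n hn => ?_⟩
  have hφk : n₀ ≤ φ k := le_trans (le_max_right k₀ n₀) (hφ.le_apply)
  have h2 : 1 - η < 𝓕 (p n) (p (φ k)) η := hn₀ n hn (φ k) hφk
  have h3 : 1 - min ε lam < 𝓕 (p n) p₀ (min ε lam) := hkey _ _ _ h2 h1
  have h4 : 𝓕 (p n) p₀ (min ε lam) ≤ 𝓕 (p n) p₀ ε :=
    (hPM.ddf _ _).mono (min_le_left _ _)
  have h5 : min ε lam ≤ lam := min_le_right _ _
  linarith

lemma tb_of_bw (hPM : IsPMSpace 𝓕 τ) (hτ : ContinuousTF τ) {E : Set S}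
    (hbw : ∀ p : ℕ → S, (∀ n, p n ∈ E) →
      ∃ p₀ ∈ E, ∃ φ : ℕ → ℕ, StrictMono φ ∧ PMConv 𝓕 (p ∘ φ) p₀) :
    ∀ ε > (0:ℝ), ∃ P : Finset S, ↑P ⊆ E ∧ E ⊆ ⋃ p ∈ P, Npt 𝓕 p ε := by
  intro ε hε
  rcases E.eq_empty_or_nonempty with rfl | ⟨x₀, hx₀⟩
  · exact ⟨∅, by simp, by simp⟩
  rcases lt_or_ge 1 ε with h1 | hε1
  · refine ⟨{x₀}, by simpa using hx₀, fun q _ => ?_⟩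
    exact Set.mem_biUnion (Finset.mem_singleton_self x₀)
      (lt_of_lt_of_le (by linarith) ((hPM.ddf x₀ q).nonneg ε))
  · classical
    by_contra hno
    push_neg at hno
    have hch : ∀ P : Finset S, ∃ x, ↑P ⊆ E → (x ∈ E ∧ x ∉ ⋃ p ∈ P, Npt 𝓕 p ε) := by
      intro P
      by_cases hP : ↑P ⊆ E
      · obtain ⟨x, hxE, hx⟩ := Set.not_subset.mp (hno P hP)
        exact ⟨x, fun _ => ⟨hxE, hx⟩⟩
      · exact ⟨x₀, fun h => absurd h hP⟩
    choose g hg using hch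
    set Pn : ℕ → Finset S := fun n => Nat.rec ∅ (fun _ Q => insert (g Q) Q) n with hPndef
    have hPE : ∀ n, ↑(Pn n) ⊆ E := by
      intro n
      induction n with
      | zero =>
        rw [hPndef]
        simp
      | succ k ih =>
        have hstep : Pn (k+1) = insert (g (Pn k)) (Pn k) := by rw [hPndef]
        rw [hstep, Finset.coe_insert, Set.insert_subset_iff]
        exact ⟨(hg (Pn k) ih).1, ih⟩
    set q : ℕ → S := fun n => g (Pn n) with hqdef
    have hqE : ∀ n, q n ∈ E := fun n => (hg _ (hPE n)).1
    have hmem : ∀ n, q n ∈ Pn (n+1) := by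
      intro n
      have hstep : Pn (n+1) = insert (g (Pn n)) (Pn n) := by rw [hPndef]
      rw [hstep]
      exact Finset.mem_insert_self _ _
    have hPmono : Monotone Pn := by
      apply monotone_nat_of_le_succ
      intro n
      have hstep : Pn (n+1) = insert (g (Pn n)) (Pn n) := by rw [hPndef]
      rw [hstep]
      exact Finset.subset_insert _ _
    have hfar : ∀ i j, i < j → ¬ (1 - ε < 𝓕 (q i) (q j) ε) := by
      intro i j hij hcon
      have h1 : q i ∈ Pn j := hPmono (Nat.succ_le_of_lt hij) (hmem i)
      exact (hg (Pn j) (hPE j)).2 (Set.mem_biUnion h1 hcon)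
    obtain ⟨p₀, hE0, φ, hφ, hconv⟩ := hbw q hqE
    obtain ⟨η, hη0, hηt, hη1, hkey⟩ := key_eta hPM hτ hε
    obtain ⟨k₀, hk₀⟩ := hconv η hη0 η ⟨hη0, hη1⟩
    have h1 : 1 - η < 𝓕 (q (φ k₀)) p₀ η := hk₀ k₀ le_rfl
    have h2 : 1 - η < 𝓕 p₀ (q (φ (k₀+1))) η := by
      rw [hPM.symm]; exact hk₀ (k₀+1) (Nat.le_succ _)
    exact hfar (φ k₀) (φ (k₀+1)) (hφ (Nat.lt_succ_self _)) (hkey _ _ _ h1 h2)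

lemma hb_of_bw (hPM : IsPMSpace 𝓕 τ) (hτ : ContinuousTF τ) {E : Set S}
    (hbw : ∀ p : ℕ → S, (∀ n, p n ∈ E) →
      ∃ p₀ ∈ E, ∃ φ : ℕ → ℕ, StrictMono φ ∧ PMConv 𝓕 (p ∘ φ) p₀) :
    ∀ 𝒱 : Set (Set S), (∀ V ∈ 𝒱, StrongOpen 𝓕 V) → E ⊆ ⋃₀ 𝒱 →
      ∃ 𝒲 : Finset (Set S), ↑𝒲 ⊆ 𝒱 ∧ E ⊆ ⋃₀ (↑𝒲 : Set (Set S)) := by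
  classical
  intro 𝒱 hopen hcov
  rcases E.eq_empty_or_nonempty with rfl | hEne
  · exact ⟨∅, by simp, by simp⟩
  have hleb : ∃ δ > (0:ℝ), ∀ x ∈ E, ∃ V ∈ 𝒱, Npt 𝓕 x δ ⊆ V := by
    by_contra hno
    push_neg at hno
    have hch : ∀ n : ℕ, ∃ x, x ∈ E ∧ ∀ V ∈ 𝒱, ¬ Npt 𝓕 x (1/((n:ℝ)+1)) ⊆ V := by
      intro n
      obtain ⟨x, hx1, hx2⟩ := hno (1/((n:ℝ)+1)) (by positivity)
      exact ⟨x, hx1, hx2⟩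
    choose x hxE hxbad using hch
    obtain ⟨p₀, hE0, φ, hφ, hconv⟩ := hbw x hxE
    obtain ⟨V, hV, hp₀V⟩ := hcov hE0
    obtain ⟨t, ht, hNV⟩ := hopen V hV p₀ hp₀V
    obtain ⟨η, hη0, hηt, hη1, hkey⟩ := key_eta hPM hτ ht
    obtain ⟨k₀, hk₀⟩ := hconv η hη0 η ⟨hη0, hη1⟩
    obtain ⟨k₁, hk₁⟩ : ∃ k : ℕ, 1/((k:ℝ)+1) < η := exists_nat_one_div_lt hη0
    set k := max k₀ k₁ with hkdef
    have hφk : (k₁:ℝ) ≤ (φ k : ℝ) := by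
      exact_mod_cast le_trans (le_max_right k₀ k₁) (hφ.le_apply)
    have hsmall : 1/((φ k : ℝ)+1) ≤ η := by
      have h1 : 1/((φ k:ℝ)+1) ≤ 1/((k₁:ℝ)+1) :=
        one_div_le_one_div_of_le (by positivity) (by linarith)
      linarith
    have h1 : 1 - η < 𝓕 p₀ (x (φ k)) η := by
      rw [hPM.symm]; exact hk₀ k (le_max_left _ _)
    have hsub : Npt 𝓕 (x (φ k)) (1/((φ k : ℝ)+1)) ⊆ V := by
      intro r hr
      apply hNV
      have hr' : 1 - 1/((φ k:ℝ)+1) < 𝓕 (x (φ k)) r (1/((φ k:ℝ)+1)) := hr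
      have hmono : 𝓕 (x (φ k)) r (1/((φ k:ℝ)+1)) ≤ 𝓕 (x (φ k)) r η :=
        (hPM.ddf _ _).mono hsmall
      have h2 : 1 - η < 𝓕 (x (φ k)) r η := by linarith
      exact hkey _ _ _ h1 h2
    exact hxbad (φ k) V hV hsub
  obtain ⟨δ, hδ, hleb⟩ := hleb
  have hch : ∀ y : S, ∃ V, y ∈ E → (V ∈ 𝒱 ∧ Npt 𝓕 y δ ⊆ V) := by
    intro y
    by_cases hy : y ∈ E
    · obtain ⟨V, hV1, hV2⟩ := hleb y hy
      exact ⟨V, fun _ => ⟨hV1, hV2⟩⟩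
    · obtain ⟨x, hx⟩ := hEne
      obtain ⟨V, hV, _⟩ := hcov hx
      exact ⟨V, fun h => absurd h hy⟩
  choose Vy hVy using hch
  obtain ⟨P, hPE, hPcov⟩ := tb_of_bw hPM hτ hbw δ hδ
  refine ⟨P.image Vy, ?_, ?_⟩
  · intro W hW
    simp only [Finset.coe_image, Set.mem_image, Finset.mem_coe] at hW
    obtain ⟨y, hy, rfl⟩ := hW
    exact (hVy y (hPE hy)).1
  · intro z hz
    obtain ⟨y, hy, hmem⟩ : ∃ y ∈ P, z ∈ Npt 𝓕 y δ := by simpa using hPcov hz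
    exact ⟨Vy y, by simp only [Finset.coe_image]; exact Set.mem_image_of_mem _ hy,
      (hVy y (hPE hy)).2 hmem⟩

lemma bw_of_hb (hPM : IsPMSpace 𝓕 τ) (hτ : ContinuousTF τ) {E : Set S}
    (hhb : ∀ 𝒱 : Set (Set S), (∀ V ∈ 𝒱, StrongOpen 𝓕 V) → E ⊆ ⋃₀ 𝒱 →
      ∃ 𝒲 : Finset (Set S), ↑𝒲 ⊆ 𝒱 ∧ E ⊆ ⋃₀ (↑𝒲 : Set (Set S)))
    (p : ℕ → S) (hp : ∀ n, p n ∈ E) :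
    ∃ p₀ ∈ E, ∃ φ : ℕ → ℕ, StrictMono φ ∧ PMConv 𝓕 (p ∘ φ) p₀ := by
  have hclu : ∃ q ∈ E, ∀ t > (0:ℝ), {n | p n ∈ Npt 𝓕 q t}.Infinite := by
    by_contra hno
    push_neg at hno
    have hch : ∀ y : S, ∃ t, y ∈ E → (0 < t ∧ {n | p n ∈ Npt 𝓕 y t}.Finite) := by
      intro y
      by_cases hy : y ∈ E
      · obtain ⟨t, ht, hfin⟩ := hno y hy
        exact ⟨t, fun _ => ⟨ht, hfin⟩⟩
      · exact ⟨1, fun h => absurd h hy⟩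
    choose t ht using hch
    set 𝒱 : Set (Set S) := (fun y => Npt 𝓕 y (t y)) '' E with h𝒱
    have hop : ∀ V ∈ 𝒱, StrongOpen 𝓕 V := by
      rintro V ⟨y, hy, rfl⟩
      exact npt_strongOpen hPM hτ y (ht y hy).1
    have hcov : E ⊆ ⋃₀ 𝒱 := by
      intro y hy
      refine ⟨_, Set.mem_image_of_mem _ hy, ?_⟩
      show 1 - t y < 𝓕 y y (t y)
      rw [hPM.refl y]
      have : H0 (t y) = 1 := by simp [H0, not_le.mpr (ht y hy).1]
      rw [this]
      linarith [(ht y hy).1]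
    obtain ⟨𝒲, h𝒲V, h𝒲cov⟩ := hhb 𝒱 hop hcov
    have hfin : (⋃ W ∈ 𝒲, {n | p n ∈ W}).Finite := by
      apply Set.Finite.biUnion 𝒲.finite_toSet
      intro W hW
      obtain ⟨y, hy, rfl⟩ := h𝒲V hW
      exact (ht y hy).2
    have huniv : (Set.univ : Set ℕ) ⊆ ⋃ W ∈ 𝒲, {n | p n ∈ W} := by
      intro n _
      obtain ⟨W, hW, hnW⟩ := h𝒲cov (hp n)
      exact Set.mem_biUnion hW hnW
    exact Set.infinite_univ (hfin.subset huniv)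
  obtain ⟨q, hqE, hclu⟩ := hclu
  have hstep : ∀ (k a : ℕ), ∃ b, a < b ∧ p b ∈ Npt 𝓕 q (1/((k:ℝ)+1)) := by
    intro k a
    obtain ⟨b, hb, hab⟩ := (hclu (1/((k:ℝ)+1)) (by positivity)).exists_gt a
    exact ⟨b, hab, hb⟩
  choose f hf1 hf2 using hstep
  set φ : ℕ → ℕ := fun k => Nat.rec (f 0 0) (fun k x => f (k+1) x) k with hφdef
  have hφmem : ∀ k : ℕ, p (φ k) ∈ Npt 𝓕 q (1/((k:ℝ)+1)) := by
    intro k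
    cases k with
    | zero => rw [hφdef]; exact hf2 0 0
    | succ n => rw [hφdef]; exact hf2 (n+1) _
  have hφ : StrictMono φ := by
    apply strictMono_nat_of_lt_succ
    intro k
    rw [hφdef]
    exact hf1 (k+1) _
  refine ⟨q, hqE, φ, hφ, ?_⟩
  intro ε hε lam hlam
  obtain ⟨k₀, hk₀⟩ : ∃ k : ℕ, 1/((k:ℝ)+1) < min ε lam :=
    exists_nat_one_div_lt (lt_min hε hlam.1)
  refine ⟨k₀, fun k hk => ?_⟩
  have hmem : 1 - 1/((k:ℝ)+1) < 𝓕 q (p (φ k)) (1/((k:ℝ)+1)) := hφmem k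
  have hkk : 1/((k:ℝ)+1) ≤ 1/((k₀:ℝ)+1) :=
    one_div_le_one_div_of_le (by positivity) (by exact_mod_cast by linarith)
  have hεk : 1/((k:ℝ)+1) ≤ ε :=
    le_trans hkk (le_of_lt (lt_of_lt_of_le hk₀ (min_le_left _ _)))
  have hlamk : 1/((k:ℝ)+1) < lam :=
    lt_of_le_of_lt hkk (lt_of_lt_of_le hk₀ (min_le_right _ _))
  have hmono : 𝓕 q (p (φ k)) (1/((k:ℝ)+1)) ≤ 𝓕 q (p (φ k)) ε :=
    (hPM.ddf _ _).mono hεk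
  show 1 - lam < 𝓕 (p (φ k)) q ε
  rw [hPM.symm]
  linarith

end Main

/-- In a PM space with continuous triangle function, for a subset `E`
the following are equivalent: (a) `E` is complete and probabilistic totally bounded;
(b) every sequence in `E` has a subsequence converging to a point of `E`
(Bolzano–Weierstrass); (c) every cover of `E` by strongly open sets has a finite
subcover (Heine–Borel). -/
theorem heine_borel_pm {S : Type*} [Nonempty S]
    (𝓕 : S → S → ℝ → ℝ) (τ : (ℝ → ℝ) → (ℝ → ℝ) → (ℝ → ℝ))
    (hPM : IsPMSpace 𝓕 τ) (hτ : ContinuousTF τ) (E : Set S) :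
    (((∀ p : ℕ → S, (∀ n, p n ∈ E) → PMCauchy 𝓕 p → ∃ p₀ ∈ E, PMConv 𝓕 p p₀) ∧
        (∀ ε > (0 : ℝ), ∃ P : Finset S, ↑P ⊆ E ∧ E ⊆ ⋃ p ∈ P, Npt 𝓕 p ε)) ↔
      (∀ p : ℕ → S, (∀ n, p n ∈ E) →
        ∃ p₀ ∈ E, ∃ φ : ℕ → ℕ, StrictMono φ ∧ PMConv 𝓕 (p ∘ φ) p₀)) ∧
    ((∀ p : ℕ → S, (∀ n, p n ∈ E) →
        ∃ p₀ ∈ E, ∃ φ : ℕ → ℕ, StrictMono φ ∧ PMConv 𝓕 (p ∘ φ) p₀) ↔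
      (∀ 𝒱 : Set (Set S), (∀ V ∈ 𝒱, StrongOpen 𝓕 V) → E ⊆ ⋃₀ 𝒱 →
        ∃ 𝒲 : Finset (Set S), ↑𝒲 ⊆ 𝒱 ∧ E ⊆ ⋃₀ (↑𝒲 : Set (Set S)))) := by
  constructor
  · constructor
    · rintro ⟨hc, htb⟩ p hp
      exact bw_of_complete_tb hPM hτ hc htb p hp
    · intro hbw
      exact ⟨complete_of_bw hPM hτ hbw, tb_of_bw hPM hτ hbw⟩
  · constructor
    · intro hbw
      exact hb_of_bw hPM hτ hbw
    · intro hhb p hp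
      exact bw_of_hb hPM hτ hhb p hp
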